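/- arXiv:1612.01394 — 2 statements merged into one kernel-verified Lean document; each statement's English description precedes it below -/
import Mathlib

section
/- The number of squarefree integers up to x satisfies ∑_{k ≤ x} |μ(k)| = (6/π²)·x + O(√x); precisely, there exists a constant A > 0 such that for all real x ≥ 1, |∑_{1 ≤ k ≤ x} μ(k)² - (6/π²)·x| ≤ A·√x. -/
open Nat ArithmeticFunction Finset Real
open scoped LSeries.notation
open scoped ArithmeticFunction.Moebius


lemma sum_div_moebius (M : ℕ) :
    (∑ d ∈ M.divisors, (μ d : ℤ)) = if M = 1 then 1 else 0 := by
  have := congrArg (fun f => f M) ArithmeticFunction.moebius_mul_coe_zeta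
  simp only [ArithmeticFunction.coe_mul_zeta_apply, ArithmeticFunction.one_apply] at this
  exact this

noncomputable def Msq (k : ℕ) : ℕ := k.factorization.prod fun p e => p ^ (e / 2)

lemma Msq_ne_zero {k : ℕ} : Msq k ≠ 0 := by
  unfold Msq
  rw [Finsupp.prod]
  exact Finset.prod_ne_zero_iff.mpr fun p hp => pow_ne_zero _
    (Nat.Prime.pos (Nat.prime_of_mem_primeFactors (by simpa using hp))).ne'

lemma Msq_factorization {k : ℕ} (hk : k ≠ 0) (p : ℕ) :
    (Msq k).factorization p = k.factorization p / 2 := by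
  unfold Msq
  rw [Finsupp.prod, Nat.factorization_prod (fun q hq => pow_ne_zero _
    (Nat.Prime.pos (Nat.prime_of_mem_primeFactors (by simpa using hq))).ne'), Finset.sum_apply']
  have : ∀ q ∈ k.factorization.support,
      ((q ^ (k.factorization q / 2)).factorization) p
        = if q = p then k.factorization q / 2 else 0 := by
    intro q hq
    rw [Nat.Prime.factorization_pow (Nat.prime_of_mem_primeFactors (by simpa using hq)),
      Finsupp.single_apply]
  rw [Finset.sum_congr rfl this, Finset.sum_ite_eq' _ p]
  split_ifs with h
  · rfl
  · have : k.factorization p = 0 := Finsupp.notMem_support_iff.mp h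
    omega



lemma sq_dvd_iff {k d : ℕ} (hk : k ≠ 0) (hd : d ≠ 0) : d ^ 2 ∣ k ↔ d ∣ Msq k := by
  rw [← Nat.factorization_le_iff_dvd (pow_ne_zero _ hd) hk,
    ← Nat.factorization_le_iff_dvd hd Msq_ne_zero, Nat.factorization_pow]
  constructor
  · intro h p
    rw [Msq_factorization hk, Nat.le_div_iff_mul_le two_pos]
    have := h p
    simpa [mul_comm] using this
  · intro h p
    have := h p
    rw [Msq_factorization hk, Nat.le_div_iff_mul_le two_pos] at this
    simpa [mul_comm] using this

lemma Msq_eq_one_iff {k : ℕ} (hk : k ≠ 0) : Msq k = 1 ↔ Squarefree k := by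
  rw [Nat.squarefree_iff_factorization_le_one hk]
  constructor
  · intro h p
    have := Msq_factorization hk p
    rw [h] at this
    simp at this
    omega
  · intro h
    rw [Nat.eq_one_iff_not_exists_prime_dvd]
    intro p hp hdvd
    have h1 : 1 ≤ (Msq k).factorization p := (Nat.Prime.factorization_pos_of_dvd hp Msq_ne_zero hdvd)
    rw [Msq_factorization hk] at h1
    have := h p
    omega


lemma filter_eq_divisors_Msq {k N : ℕ} (hk : 1 ≤ k) (hkN : k ≤ N) :
    (Finset.Icc 1 N).filter (fun d => d ^ 2 ∣ k) = (Msq k).divisors := by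
  ext d
  simp only [Finset.mem_filter, Finset.mem_Icc, Nat.mem_divisors]
  constructor
  · rintro ⟨⟨h1, _⟩, h2⟩
    exact ⟨(sq_dvd_iff (by omega) (by omega)).mp h2, Msq_ne_zero⟩
  · rintro ⟨h1, _⟩
    have hd : d ≠ 0 := by rintro rfl; exact Msq_ne_zero (Nat.eq_zero_of_zero_dvd h1)
    have h2 : d ^ 2 ∣ k := (sq_dvd_iff (by omega) hd).mpr h1
    have : d ∣ k := dvd_trans (dvd_pow_self d two_ne_zero) h2
    exact ⟨⟨by omega, le_trans (Nat.le_of_dvd (by omega) this) hkN⟩, h2⟩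

lemma per_k {k N : ℕ} (hk : 1 ≤ k) (hkN : k ≤ N) :
    ((μ k : ℝ)) ^ 2 = ∑ d ∈ Finset.Icc 1 N, if d ^ 2 ∣ k then (μ d : ℝ) else 0 := by
  rw [← Finset.sum_filter, filter_eq_divisors_Msq hk hkN]
  have : (∑ d ∈ (Msq k).divisors, (μ d : ℝ)) = ((∑ d ∈ (Msq k).divisors, (μ d : ℤ) : ℤ) : ℝ) := by
    push_cast; rfl
  rw [this, sum_div_moebius]
  by_cases hs : Squarefree k
  · rw [if_pos ((Msq_eq_one_iff (by omega : k ≠ 0)).mpr hs)]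
    have h2 := ArithmeticFunction.moebius_sq_eq_one_of_squarefree hs
    have : ((μ k : ℝ)) ^ 2 = ((μ k ^ 2 : ℤ) : ℝ) := by push_cast; ring
    rw [this, h2]
  · rw [if_neg (fun h => hs ((Msq_eq_one_iff (by omega : k ≠ 0)).mp h)),
      ArithmeticFunction.moebius_eq_zero_of_not_squarefree hs]
    norm_num

lemma swap_sum {N : ℕ} :
    (∑ k ∈ Finset.Icc 1 N, ((μ k : ℝ)) ^ 2)
      = ∑ d ∈ Finset.Icc 1 N, (μ d : ℝ) * (N / d ^ 2 : ℕ) := by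
  have h1 : (∑ k ∈ Finset.Icc 1 N, ((μ k : ℝ)) ^ 2)
      = ∑ k ∈ Finset.Icc 1 N, ∑ d ∈ Finset.Icc 1 N, if d ^ 2 ∣ k then (μ d : ℝ) else 0 :=
    Finset.sum_congr rfl fun k hk => per_k (Finset.mem_Icc.mp hk).1 (Finset.mem_Icc.mp hk).2
  rw [h1, Finset.sum_comm]
  refine Finset.sum_congr rfl fun d _ => ?_
  rw [← Finset.sum_filter, Finset.sum_const]
  have hcard : ((Finset.Icc 1 N).filter (fun k => d ^ 2 ∣ k)).card = N / d ^ 2 := by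
    rw [← Nat.Ioc_filter_dvd_card_eq_div]
    congr 1
  rw [hcard, nsmul_eq_mul, mul_comm]

lemma moebius_hasSum : HasSum (fun d : ℕ => (μ d : ℝ) / (d : ℝ) ^ 2) (6 / π ^ 2) := by
  have hπ : ((π : ℂ)) ^ 2 ≠ 0 := pow_ne_zero _ (Complex.ofReal_ne_zero.mpr Real.pi_ne_zero)
  have hsum : LSeriesSummable ↗μ 2 :=
    ArithmeticFunction.LSeriesSummable_moebius_iff.mpr (by norm_num)
  have hz := ArithmeticFunction.LSeries_zeta_mul_Lseries_moebius (s := 2) (by norm_num)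
  rw [ArithmeticFunction.LSeries_zeta_eq_riemannZeta (by norm_num), riemannZeta_two] at hz
  have hval : LSeries ↗μ 2 = 6 / (π : ℂ) ^ 2 := by
    field_simp at hz ⊢
    linear_combination hz
  have h1 : HasSum (fun n => LSeries.term ↗μ 2 n) (6 / (π : ℂ) ^ 2) := hval ▸ hsum.hasSum
  have h2 : (fun n : ℕ => (((μ n : ℝ) / (n : ℝ) ^ 2 : ℝ) : ℂ)) = fun n => LSeries.term ↗μ 2 n := by
    funext n
    rw [LSeries.term_def]
    rcases eq_or_ne n 0 with rfl | hn
    · simp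
    · rw [if_neg hn]
      push_cast
      norm_num [Complex.cpow_ofNat]
  rw [show ((6:ℂ) / (π:ℂ)^2) = (((6 / π^2 : ℝ)) : ℂ) by push_cast; ring] at h1
  exact Complex.hasSum_ofReal.mp (h2 ▸ h1)

lemma abs_moebius_real_le (n : ℕ) : |(μ n : ℝ)| ≤ 1 := by
  have := ArithmeticFunction.abs_moebius_le_one (n := n)
  exact_mod_cast (by exact_mod_cast this : |((μ n : ℤ) : ℝ)| ≤ 1)

lemma tail_sq_le {N : ℕ} (hN : 1 ≤ N) :
    ∑' i : ℕ, (((i + N + 1 : ℕ) : ℝ) ^ 2)⁻¹ ≤ 1 / (N : ℝ) := by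
  apply Real.tsum_le_of_sum_range_le (fun i => by positivity)
  intro n
  have hre : (∑ i ∈ Finset.range n, (((i + N + 1 : ℕ) : ℝ) ^ 2)⁻¹)
      = ∑ j ∈ Finset.Ioc N (N + n), ((j : ℝ) ^ 2)⁻¹ := by
    rw [← Finset.Ico_add_one_add_one_eq_Ioc, Finset.sum_Ico_eq_sum_range]
    have : N + n + 1 - (N + 1) = n := by omega
    rw [this]
    exact Finset.sum_congr rfl fun i _ => by rw [show N + 1 + i = i + N + 1 from by omega]
  rw [hre]
  calc ∑ j ∈ Finset.Ioc N (N + n), ((j : ℝ) ^ 2)⁻¹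
      ≤ (N : ℝ)⁻¹ - ((N + n : ℕ) : ℝ)⁻¹ := sum_Ioc_inv_sq_le_sub (by omega) (by omega)
    _ ≤ 1 / (N : ℝ) := by
        rw [one_div]
        have : (0:ℝ) ≤ ((N + n : ℕ) : ℝ)⁻¹ := by positivity
        linarith

lemma summable_shift {N : ℕ} : Summable (fun i : ℕ => (((i + N + 1 : ℕ) : ℝ) ^ 2)⁻¹) := by
  have h := (summable_nat_add_iff (f := fun n : ℕ => (((n : ℕ) : ℝ) ^ 2)⁻¹) (N + 1)).mpr
    (summable_nat_pow_inv.mpr one_lt_two)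
  refine h.congr fun i => ?_
  rw [show i + (N + 1) = i + N + 1 from by omega]

lemma partial_close {N : ℕ} (hN : 1 ≤ N) :
    |(∑ d ∈ Finset.Icc 1 N, (μ d : ℝ) / (d : ℝ) ^ 2) - 6 / π ^ 2| ≤ 1 / (N : ℝ) := by
  set g : ℕ → ℝ := fun d => (μ d : ℝ) / (d : ℝ) ^ 2 with hg
  have hsum : Summable g := moebius_hasSum.summable
  have htsum : ∑' d, g d = 6 / π ^ 2 := moebius_hasSum.tsum_eq
  have hrange : ∑ d ∈ Finset.range (N + 1), g d = ∑ d ∈ Finset.Icc 1 N, g d := by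
    rw [Finset.range_eq_Ico, Finset.sum_eq_sum_Ico_succ_bot (by omega)]
    rw [Finset.Ico_add_one_right_eq_Icc]
    simp [hg]
  have hkey := Summable.sum_add_tsum_nat_add (f := g) (N + 1) hsum
  rw [htsum, hrange] at hkey
  have hb : ∀ i : ℕ, |g (i + (N + 1))| ≤ (((i + N + 1 : ℕ) : ℝ) ^ 2)⁻¹ := by
    intro i
    have h1 : (1:ℝ) ≤ ((i + N + 1 : ℕ) : ℝ) := by exact_mod_cast Nat.one_le_iff_ne_zero.mpr (by omega)
    have heq : i + (N + 1) = i + N + 1 := by omega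
    rw [hg]
    simp only [heq]
    rw [abs_div, abs_of_nonneg (by positivity : (0:ℝ) ≤ ((i + N + 1 : ℕ) : ℝ) ^ 2)]
    rw [div_le_iff₀ (by positivity), inv_mul_cancel₀ (by positivity)]
    exact abs_moebius_real_le _
  have hdiff : (∑ d ∈ Finset.Icc 1 N, g d) - 6 / π ^ 2 = -∑' i, g (i + (N + 1)) := by linarith
  rw [hdiff, abs_neg]
  have habs : Summable fun i => ‖g (i + (N + 1))‖ := by
    simpa [Real.norm_eq_abs] using (((summable_nat_add_iff (N+1)).mpr hsum).abs)
  calc |∑' i, g (i + (N + 1))| ≤ ∑' i, |g (i + (N + 1))| := by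
        simpa [Real.norm_eq_abs] using norm_tsum_le_tsum_norm habs
    _ ≤ ∑' i : ℕ, (((i + N + 1 : ℕ) : ℝ) ^ 2)⁻¹ :=
        Summable.tsum_le_tsum hb (((summable_nat_add_iff (N+1)).mpr hsum).abs) summable_shift
    _ ≤ 1 / (N : ℝ) := tail_sq_le hN

theorem squarefree_count_asymptotic :
    ∃ A : ℝ, 0 < A ∧ ∀ x : ℝ, 1 ≤ x →
      |(∑ k ∈ Finset.Icc 1 ⌊x⌋₊,
          ((ArithmeticFunction.moebius k : ℝ)) ^ 2) - (6 / Real.pi ^ 2) * x| ≤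
        A * Real.sqrt x := by
  refine ⟨10, by norm_num, fun x hx => ?_⟩
  set N := ⌊x⌋₊ with hNdef
  have hN1 : 1 ≤ N := Nat.le_floor (by exact_mod_cast hx)
  have hNx : (N : ℝ) ≤ x := Nat.floor_le (by linarith)
  have hxN : x < N + 1 := Nat.lt_floor_add_one x
  have hsx : 1 ≤ Real.sqrt x := by
    rw [show (1:ℝ) = Real.sqrt 1 from (Real.sqrt_one).symm]
    exact Real.sqrt_le_sqrt hx
  set D := Nat.sqrt N with hDdef
  have hD1 : 1 ≤ D := Nat.sqrt_pos.mpr (by omega)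
  have hDN : D ≤ N := Nat.sqrt_le_self N
  have hDsx : (D : ℝ) ≤ Real.sqrt x := by
    have h1 : (D : ℝ) ≤ Real.sqrt N := by
      rw [show ((D:ℝ)) = Real.sqrt ((D:ℝ)^2) from (Real.sqrt_sq (by positivity)).symm]
      apply Real.sqrt_le_sqrt
      have := Nat.sqrt_le' N
      push_cast [← hDdef]
      exact_mod_cast Nat.sqrt_le' N
    exact h1.trans (Real.sqrt_le_sqrt hNx)
  have hNlt : (N : ℝ) < ((D:ℝ) + 1) ^ 2 := by
    have := Nat.lt_succ_sqrt N
    push_cast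
    exact_mod_cast Nat.lt_succ_sqrt' N
  set c : ℝ := 6 / π ^ 2 with hc
  have hc0 : 0 < c := by positivity
  have hc1 : c ≤ 1 := by
    rw [hc, div_le_one (by positivity)]
    nlinarith [Real.pi_gt_three]
  set P : ℝ := ∑ d ∈ Finset.Icc 1 N, (μ d : ℝ) / (d : ℝ) ^ 2 with hP
  -- decomposition
  have key : (∑ k ∈ Finset.Icc 1 N, ((μ k : ℝ)) ^ 2) - c * x
      = (∑ d ∈ Finset.Icc 1 N, (μ d : ℝ) * (((N / d ^ 2 : ℕ) : ℝ) - (N : ℝ) / (d : ℝ) ^ 2))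
        + (N : ℝ) * (P - c) + c * ((N : ℝ) - x) := by
    rw [swap_sum]
    have h1 : ∑ d ∈ Finset.Icc 1 N, (μ d : ℝ) * (((N / d ^ 2 : ℕ) : ℝ) - (N : ℝ) / (d : ℝ) ^ 2)
        = (∑ d ∈ Finset.Icc 1 N, (μ d : ℝ) * ((N / d ^ 2 : ℕ) : ℝ)) - (N : ℝ) * P := by
      rw [hP, Finset.mul_sum, ← Finset.sum_sub_distrib]
      exact Finset.sum_congr rfl fun d _ => by ring
    rw [h1]
    ring
  rw [key]
  -- bound T2
  have hB2 : |(N : ℝ) * (P - c)| ≤ 1 := by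
    rw [abs_mul, abs_of_nonneg (by positivity : (0:ℝ) ≤ (N:ℝ))]
    calc (N:ℝ) * |P - c| ≤ (N:ℝ) * (1 / N) := by
          apply mul_le_mul_of_nonneg_left (partial_close hN1) (by positivity)
      _ = 1 := by field_simp
  -- bound T3
  have hB3 : |c * ((N : ℝ) - x)| ≤ 1 := by
    rw [abs_mul, abs_of_nonneg hc0.le]
    have : |(N : ℝ) - x| ≤ 1 := by rw [abs_le]; constructor <;> linarith
    nlinarith
  -- bound T1
  have hterm : ∀ d ∈ Finset.Icc 1 N,
      |(μ d : ℝ) * (((N / d ^ 2 : ℕ) : ℝ) - (N : ℝ) / (d : ℝ) ^ 2)|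
        ≤ |((N / d ^ 2 : ℕ) : ℝ) - (N : ℝ) / (d : ℝ) ^ 2| := by
    intro d _
    rw [abs_mul]
    exact mul_le_of_le_one_left (abs_nonneg _) (abs_moebius_real_le d)
  have hB1 : |∑ d ∈ Finset.Icc 1 N, (μ d : ℝ) * (((N / d ^ 2 : ℕ) : ℝ) - (N : ℝ) / (d : ℝ) ^ 2)|
      ≤ 4 * Real.sqrt x := by
    calc |∑ d ∈ Finset.Icc 1 N, (μ d : ℝ) * (((N / d ^ 2 : ℕ) : ℝ) - (N : ℝ) / (d : ℝ) ^ 2)|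
        ≤ ∑ d ∈ Finset.Icc 1 N, |(μ d : ℝ) * (((N / d ^ 2 : ℕ) : ℝ) - (N : ℝ) / (d : ℝ) ^ 2)| :=
          Finset.abs_sum_le_sum_abs _ _
      _ ≤ ∑ d ∈ Finset.Icc 1 N, |((N / d ^ 2 : ℕ) : ℝ) - (N : ℝ) / (d : ℝ) ^ 2| :=
          Finset.sum_le_sum hterm
      _ ≤ 4 * Real.sqrt x := by
          have hIcc : Finset.Icc 1 N = Finset.Ioc 0 N := Finset.Icc_add_one_left_eq_Ioc 0 N
          rw [hIcc, ← Finset.Ioc_union_Ioc_eq_Ioc (Nat.zero_le D) hDN,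
            Finset.sum_union (Finset.disjoint_left.mpr fun d h1 h2 => by
              simp only [Finset.mem_Ioc] at h1 h2; omega)]
          have hpartA : ∑ d ∈ Finset.Ioc 0 D, |((N / d ^ 2 : ℕ) : ℝ) - (N : ℝ) / (d : ℝ) ^ 2|
              ≤ (D : ℝ) := by
            have hbound : ∀ d ∈ Finset.Ioc 0 D,
                |((N / d ^ 2 : ℕ) : ℝ) - (N : ℝ) / (d : ℝ) ^ 2| ≤ 1 := by
              intro d hd
              have hd0 : 0 < d := (Finset.mem_Ioc.mp hd).1
              have hd2 : (0:ℝ) < (d:ℝ) ^ 2 := by positivity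
              have hle : ((N / d ^ 2 : ℕ) : ℝ) ≤ (N:ℝ) / (d:ℝ) ^ 2 := by
                have h := Nat.cast_div_le (α := ℝ) (m := N) (n := d ^ 2)
                push_cast at h
                exact h
              have hlt : (N:ℝ) / (d:ℝ) ^ 2 < ((N / d ^ 2 : ℕ) : ℝ) + 1 := by
                rw [div_lt_iff₀ hd2]
                have h := Nat.lt_div_mul_add (a := N) (b := d ^ 2) (by positivity)
                have h' : (N:ℝ) < ((N / d ^ 2 : ℕ) : ℝ) * ((d:ℝ)^2) + ((d:ℝ)^2) := by
                  exact_mod_cast h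
                nlinarith [h']
              rw [abs_le]
              constructor <;> linarith
            calc ∑ d ∈ Finset.Ioc 0 D, |((N / d ^ 2 : ℕ) : ℝ) - (N : ℝ) / (d : ℝ) ^ 2|
                ≤ (Finset.Ioc 0 D).card • (1:ℝ) := Finset.sum_le_card_nsmul _ _ 1 hbound
              _ = (D : ℝ) := by simp
          have hpartB : ∑ d ∈ Finset.Ioc D N, |((N / d ^ 2 : ℕ) : ℝ) - (N : ℝ) / (d : ℝ) ^ 2|
              ≤ 3 * Real.sqrt x := by
            have heq : ∀ d ∈ Finset.Ioc D N,
                |((N / d ^ 2 : ℕ) : ℝ) - (N : ℝ) / (d : ℝ) ^ 2| = (N:ℝ) * (((d:ℝ)) ^ 2)⁻¹ := by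
              intro d hd
              obtain ⟨hdD, hdN⟩ := Finset.mem_Ioc.mp hd
              have hNd : N < d ^ 2 := by
                have h1 : (D + 1) * (D + 1) ≤ d * d := Nat.mul_le_mul hdD hdD
                have h2 : N < (D + 1) * (D + 1) := Nat.lt_succ_sqrt N
                have h3 : N < d * d := lt_of_lt_of_le h2 h1
                simpa [pow_two] using h3
              have hdiv0 : N / d ^ 2 = 0 := Nat.div_eq_of_lt hNd
              have hnn : (0:ℝ) ≤ (N:ℝ) / (d:ℝ) ^ 2 := by positivity
              rw [hdiv0, Nat.cast_zero, zero_sub, abs_neg, abs_of_nonneg hnn, div_eq_mul_inv]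
            rw [Finset.sum_congr rfl heq, ← Finset.mul_sum]
            have hD0 : (0:ℝ) < (D:ℝ) := by exact_mod_cast hD1
            have hN0 : (0:ℝ) < (N:ℝ) := by exact_mod_cast hN1
            have hND : (N:ℝ) * (D:ℝ)⁻¹ ≤ (D:ℝ) + 2 := by
              have hn : N + 1 ≤ (D + 1) * (D + 1) := Nat.lt_succ_sqrt N
              have hn' : (N:ℝ) + 1 ≤ ((D:ℝ) + 1) * ((D:ℝ) + 1) := by exact_mod_cast hn
              rw [mul_inv_le_iff₀ hD0]
              nlinarith
            have hsum2 : ∑ d ∈ Finset.Ioc D N, (((d:ℝ)) ^ 2)⁻¹ ≤ (D:ℝ)⁻¹ :=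
              le_trans (sum_Ioc_inv_sq_le_sub (by omega) hDN) (by
                have : (0:ℝ) ≤ ((N:ℝ))⁻¹ := by positivity
                linarith)
            calc (N:ℝ) * ∑ d ∈ Finset.Ioc D N, (((d:ℝ)) ^ 2)⁻¹
                ≤ (N:ℝ) * (D:ℝ)⁻¹ := mul_le_mul_of_nonneg_left hsum2 (by positivity)
              _ ≤ (D:ℝ) + 2 := hND
              _ ≤ 3 * Real.sqrt x := by linarith
          linarith
  calc |_ + (N:ℝ) * (P - c) + c * ((N:ℝ) - x)|
      ≤ |_ + (N:ℝ) * (P - c)| + |c * ((N:ℝ) - x)| := abs_add_le _ _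
    _ ≤ |∑ d ∈ Finset.Icc 1 N, (μ d : ℝ) * (((N / d ^ 2 : ℕ) : ℝ) - (N : ℝ) / (d : ℝ) ^ 2)|
        + |(N:ℝ) * (P - c)| + |c * ((N:ℝ) - x)| := by
        have := abs_add_le (∑ d ∈ Finset.Icc 1 N, (μ d : ℝ) * (((N / d ^ 2 : ℕ) : ℝ) - (N : ℝ) / (d : ℝ) ^ 2)) ((N:ℝ) * (P - c))
        linarith
    _ ≤ 4 * Real.sqrt x + 1 + 1 := by linarith
    _ ≤ 10 * Real.sqrt x := by linarith
end

section
/- For every positive integer n, the determinant of the n×n Redheffer matrix equals M(n), the Mertens function at n. -/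
open Nat ArithmeticFunction Finset Matrix

/-- The `n × n` Redheffer matrix: entry `(i, j)` (with `i, j` running over `1, …, n`,
represented by `Fin n` shifted by one) is `1` if `j = 1` or `i ∣ j`, and `0` otherwise. -/
def redheffer (n : ℕ) : Matrix (Fin n) (Fin n) ℤ :=
  fun i j => if j.val + 1 = 1 ∨ (i.val + 1) ∣ (j.val + 1) then 1 else 0

/-- The upper-triangular Möbius matrix. -/
def moebMat (n : ℕ) : Matrix (Fin n) (Fin n) ℤ :=
  fun i j => if (i.val + 1) ∣ (j.val + 1) then (moebius ((j.val + 1) / (i.val + 1)) : ℤ) else 0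

lemma sum_divisors_moebius_eq (m : ℕ) :
    ∑ d ∈ m.divisors, (moebius d : ℤ) = if m = 1 then 1 else 0 := by
  have h : (moebius * ((ArithmeticFunction.zeta : ArithmeticFunction ℕ) : ArithmeticFunction ℤ) : ArithmeticFunction ℤ) m = (1 : ArithmeticFunction ℤ) m := by
    rw [moebius_mul_coe_zeta]
  rwa [coe_mul_zeta_apply, ArithmeticFunction.one_apply] at h

lemma key_sum (a N n : ℕ) (ha : 0 < a) (hN : 0 < N) (hNn : N ≤ n) :
    ∑ k ∈ Finset.range n, (if a ∣ (k + 1) ∧ (k + 1) ∣ N then (moebius ((k + 1) / a) : ℤ) else 0)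
      = if a = N then 1 else 0 := by
  by_cases h : a ∣ N
  · rw [← Finset.sum_filter]
    have htrans : ∑ k ∈ (Finset.range n).filter (fun k => a ∣ (k + 1) ∧ (k + 1) ∣ N),
        (moebius ((k + 1) / a) : ℤ) = ∑ d ∈ (N / a).divisors, (moebius d : ℤ) := by
      apply Finset.sum_nbij' (fun k => (k + 1) / a) (fun d => a * d - 1)
      · intro k hk
        simp only [Finset.mem_filter, Finset.mem_range] at hk
        obtain ⟨hkn, hak, hkN⟩ := hk
        rw [Nat.mem_divisors]
        refine ⟨?_, Nat.div_ne_zero_iff.mpr ⟨ha.ne', Nat.le_of_dvd hN h⟩⟩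
        rw [Nat.dvd_div_iff_mul_dvd h, Nat.mul_div_cancel' hak]
        exact hkN
      · intro d hd
        rw [Nat.mem_divisors] at hd
        obtain ⟨hdvd, hne⟩ := hd
        have hadN : a * d ∣ N := (Nat.dvd_div_iff_mul_dvd h).mp hdvd
        have hd0 : 0 < d := Nat.pos_of_ne_zero (by rintro rfl; simp at hdvd hne ⊢; omega)
        have had : 0 < a * d := Nat.mul_pos ha hd0
        simp only [Finset.mem_filter, Finset.mem_range]
        have h1 : a * d - 1 + 1 = a * d := Nat.succ_pred_eq_of_pos had
        refine ⟨?_, ?_, ?_⟩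
        · have := Nat.le_of_dvd hN hadN
          omega
        · rw [h1]; exact Dvd.intro d rfl
        · rw [h1]; exact hadN
      · intro k hk
        simp only [Finset.mem_filter, Finset.mem_range] at hk
        obtain ⟨hkn, ⟨c, hc⟩, hkN⟩ := hk
        have hce : (k + 1) / a = c := by rw [hc, Nat.mul_div_cancel_left c ha]
        simp only [hce]
        omega
      · intro d hd
        rw [Nat.mem_divisors] at hd
        have hd0 : 0 < d := Nat.pos_of_ne_zero (by rintro rfl; simp at hd; omega)
        have had : 0 < a * d := Nat.mul_pos ha hd0
        have h1 : a * d - 1 + 1 = a * d := Nat.succ_pred_eq_of_pos had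
        rw [h1, Nat.mul_div_cancel_left d ha]
      · intro k hk
        simp only [Finset.mem_filter, Finset.mem_range] at hk
        rfl
    rw [htrans, sum_divisors_moebius_eq]
    have : N / a = 1 ↔ a = N := by
      constructor
      · intro h1
        have h2 := Nat.div_mul_cancel h
        rw [h1, one_mul] at h2
        omega
      · rintro rfl; exact Nat.div_self ha
    simp only [this]
  · have hz : ∀ k ∈ Finset.range n,
        (if a ∣ (k + 1) ∧ (k + 1) ∣ N then (moebius ((k + 1) / a) : ℤ) else 0) = 0 := by
      intro k _
      rw [if_neg]
      rintro ⟨h1, h2⟩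
      exact h (h1.trans h2)
    rw [Finset.sum_congr rfl hz]
    simp only [Finset.sum_const_zero]
    rw [if_neg (by rintro rfl; exact h dvd_rfl)]

lemma mul_apply_ne (n : ℕ) (i j : Fin n) (hj : j.val ≠ 0) :
    (moebMat n * redheffer n) i j = if i = j then 1 else 0 := by
  rw [Matrix.mul_apply]
  have : ∀ k : Fin n, moebMat n i k * redheffer n k j =
      (if (i.val + 1) ∣ (k.val + 1) ∧ (k.val + 1) ∣ (j.val + 1)
        then (moebius ((k.val + 1) / (i.val + 1)) : ℤ) else 0) := by
    intro k
    unfold moebMat redheffer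
    have hj1 : ¬ (j.val + 1 = 1) := by omega
    by_cases h1 : (i.val + 1) ∣ (k.val + 1) <;>
      by_cases h2 : (k.val + 1) ∣ (j.val + 1) <;>
      simp [h1, h2, hj1, hj]
  rw [Finset.sum_congr rfl fun k _ => this k]
  rw [Fin.sum_univ_eq_sum_range
    (fun k => if (i.val + 1) ∣ (k + 1) ∧ (k + 1) ∣ (j.val + 1)
      then (moebius ((k + 1) / (i.val + 1)) : ℤ) else 0)]
  rw [key_sum (i.val + 1) (j.val + 1) n (by omega) (by omega) (by omega)]
  have heq : i.val + 1 = j.val + 1 ↔ i = j := by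
    rw [Fin.ext_iff]; omega
  simp only [heq]

theorem det_redheffer (n : ℕ) (hn : 1 ≤ n) :
    (redheffer n).det = ∑ k ∈ Finset.Icc 1 n, (ArithmeticFunction.moebius k : ℤ) := by
  have hdetB : (moebMat n).det = 1 := by
    rw [Matrix.det_of_upperTriangular]
    · have : ∀ i : Fin n, moebMat n i i = 1 := by
        intro i
        unfold moebMat
        rw [if_pos dvd_rfl, Nat.div_self (by omega)]
        simp
      simp [this]
    · intro i j hij
      unfold moebMat
      rw [if_neg]
      intro hdvd
      have := Nat.le_of_dvd (by omega) hdvd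
      simp only [id_eq] at hij
      omega
  have hmulcol0 : ∀ i : Fin n, (moebMat n * redheffer n) i ⟨0, by omega⟩ =
      ∑ k : Fin n, moebMat n i k := by
    intro i
    rw [Matrix.mul_apply]
    apply Finset.sum_congr rfl
    intro k _
    unfold redheffer
    simp
  have hlower : ((moebMat n * redheffer n)).det = ∏ i, (moebMat n * redheffer n) i i := by
    apply Matrix.det_of_lowerTriangular
    intro i j hij
    simp only [OrderDual.toDual_lt_toDual] at hij
    have hlt : i.val < j.val := hij
    rw [mul_apply_ne n i j (by omega), if_neg (by intro h; subst h; exact lt_irrefl _ hlt)]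
  have hdiag : ∏ i, (moebMat n * redheffer n) i i =
      ∑ k ∈ Finset.Icc 1 n, (moebius k : ℤ) := by
    rw [Finset.prod_eq_single (⟨0, by omega⟩ : Fin n)]
    · rw [hmulcol0]
      have : ∀ k : Fin n, moebMat n (⟨0, by omega⟩ : Fin n) k = (moebius (k.val + 1) : ℤ) := by
        intro k
        unfold moebMat
        simp
      rw [Finset.sum_congr rfl fun k _ => this k]
      rw [Fin.sum_univ_eq_sum_range (fun k => (moebius (k + 1) : ℤ))]
      rw [show Finset.Icc 1 n = Finset.Ico 1 (n + 1) by rw [Finset.Ico_add_one_right_eq_Icc]]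
      rw [Finset.sum_Ico_eq_sum_range]
      simp [add_comm]
    · intro i _ hi
      rw [mul_apply_ne n i i (by simpa [Fin.ext_iff] using hi), if_pos rfl]
    · intro h
      exact absurd (Finset.mem_univ _) h
  have hdet : (moebMat n * redheffer n).det = (moebMat n).det * (redheffer n).det :=
    Matrix.det_mul _ _
  rw [hdetB, one_mul] at hdet
  rw [← hdet, hlower, hdiag]
end
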